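/- arXiv:1808.08596 — 7 statements merged into one kernel-verified Lean document; each statement's English description precedes it below -/
import Mathlib

section
/- If there exists a splitting family of size κ, then Measuring_κ fails. That is, there exists a sequence ⟨𝒞_α : α ∈ ω₁ ∩ Lim⟩, where each 𝒞_α is a collection of at most κ many closed cofinal subsets of α, such that no club D ⊆ ω₁ measures the sequence: for every club D there is a limit point δ of D and some c ∈ 𝒞_δ such that for all β < δ, (D ∩ δ) \ β is neither a subset of c nor disjoint from c. -/
noncomputable section
open Set

/-- The first uncountable ordinal. -/
def omega1 : Ordinal := (Cardinal.aleph 1).ord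

/-- `δ` is a limit point of `D`. -/
def IsLimitPoint (D : Set Ordinal) (δ : Ordinal) : Prop :=
  0 < δ ∧ ∀ β < δ, ∃ ξ ∈ D, β < ξ ∧ ξ < δ

/-- `D` is a club subset of `ω₁`. -/
def IsClubω₁ (D : Set Ordinal) : Prop :=
  (∀ ξ ∈ D, ξ < omega1) ∧ (∀ β < omega1, ∃ ξ ∈ D, β < ξ) ∧
    (∀ δ < omega1, IsLimitPoint D δ → δ ∈ D)

/-- `X` measures `Y` (both of supremum `δ`). -/
def Measures (X Y : Set Ordinal) (δ : Ordinal) : Prop :=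
  ∃ β < δ, ({ξ ∈ X | β ≤ ξ} ⊆ Y ∨ ∀ ξ ∈ X, β ≤ ξ → ξ ∉ Y)

/-- `c` is a closed cofinal subset of the limit ordinal `α`. -/
def IsClosedCofinalIn (c : Set Ordinal) (α : Ordinal) : Prop :=
  (∀ ξ ∈ c, ξ < α) ∧ (∀ β < α, ∃ ξ ∈ c, β < ξ) ∧
    (∀ γ < α, IsLimitPoint c γ → γ ∈ c)

/-- A set of ordinals has order type `ω`. -/
def HasOrderTypeOmega (L : Set Ordinal) : Prop :=
  L.Infinite ∧ ∀ γ ∈ L, (L ∩ Set.Iio γ).Finite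

/-- A splitting family on ω. -/
def IsSplittingFamily (S : Set (Set ℕ)) : Prop :=
  ∀ x : Set ℕ, x.Infinite → ∃ A ∈ S, (x ∩ A).Infinite ∧ (x \ A).Infinite

namespace MeasuringProof

open Cardinal Ordinal

/-- Auxiliary ladder: successor ordinals climbing along an enumeration. -/
def ladderAux (f : ℕ → Ordinal) : ℕ → Ordinal
  | 0 => f 0 + 1
  | n + 1 => max (ladderAux f n) (f (n + 1)) + 1

theorem exists_ladder {α : Ordinal} (h1 : α < omega1) (h2 : Order.IsSuccLimit α) :
    ∃ e : ℕ → Ordinal, StrictMono e ∧ (∀ n, e n < α) ∧ (∀ n, ∃ β, e n = β + 1) ∧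
      ∀ β < α, ∃ n, β < e n := by
  have hc : (Set.Iio α).Countable := by
    rw [Cardinal.countable_iff_lt_aleph_one, Ordinal.mk_Iio_ordinal,
      Cardinal.lift_lt_aleph_one]
    exact Cardinal.lt_ord.mp h1
  obtain ⟨f, hf⟩ := hc.exists_eq_range ⟨0, h2.pos⟩
  have hflt : ∀ n, f n < α := by
    intro n
    have : f n ∈ Set.Iio α := by rw [hf]; exact Set.mem_range_self n
    exact this
  have hsucclt : ∀ β < α, β + 1 < α := by
    intro β hβ
    rw [Ordinal.add_one_eq_succ]
    exact h2.succ_lt hβ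
  have helt : ∀ n, ladderAux f n < α := by
    intro n
    induction n with
    | zero => exact hsucclt _ (hflt 0)
    | succ n ih =>
      exact hsucclt _ (max_lt ih (hflt (n + 1)))
  have hlt_add_one : ∀ β : Ordinal, β < β + 1 := by
    intro β
    rw [Ordinal.add_one_eq_succ]
    exact Order.lt_succ β
  have hfe : ∀ n, f n < ladderAux f n := by
    intro n
    cases n with
    | zero => exact hlt_add_one _
    | succ n =>
      exact lt_of_le_of_lt (le_max_right _ _) (hlt_add_one _)
  have hemono : StrictMono (ladderAux f) := by
    apply strictMono_nat_of_lt_succ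
    intro n
    exact lt_of_le_of_lt (le_max_left _ _) (hlt_add_one _)
  refine ⟨ladderAux f, hemono, helt, ?_, ?_⟩
  · intro n
    cases n with
    | zero => exact ⟨f 0, rfl⟩
    | succ n => exact ⟨_, rfl⟩
  · intro β hβ
    have : β ∈ Set.range f := by rw [← hf]; exact hβ
    obtain ⟨n, rfl⟩ := this
    exact ⟨n, hfe n⟩

theorem locate {e : ℕ → Ordinal} {γ : Ordinal} (h0 : e 0 ≤ γ) (hub : ∃ m, γ < e m) :
    ∃ n, e n ≤ γ ∧ γ < e (n + 1) := by
  classical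
  have hm := Nat.find_spec hub
  rcases h : Nat.find hub with _ | n
  · rw [h] at hm
    exact absurd hm (not_lt.mpr h0)
  · rw [h] at hm
    refine ⟨n, ?_, hm⟩
    have := Nat.find_min hub (by rw [h]; exact n.lt_succ_self)
    exact le_of_not_gt this

theorem interval_unique {e : ℕ → Ordinal} (he : StrictMono e) {γ : Ordinal} {n k : ℕ}
    (h1 : e n ≤ γ) (h2 : γ < e (n + 1)) (h3 : e k ≤ γ) (h4 : γ < e (k + 1)) : k = n := by
  rcases lt_trichotomy k n with h | h | h
  · exact absurd ((he.monotone (Nat.succ_le_of_lt h)).trans h1) (not_le.mpr h4)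
  · exact h
  · exact absurd ((he.monotone (Nat.succ_le_of_lt h)).trans h3) (not_le.mpr h2)

/-- The union of half-open ladder intervals indexed by `A`. -/
def cSet (e : ℕ → Ordinal) (A : Set ℕ) : Set Ordinal :=
  {ξ | ∃ n ∈ A, e n ≤ ξ ∧ ξ < e (n + 1)}

theorem not_isLimitPoint_succ (c : Set Ordinal) (β : Ordinal) :
    ¬ IsLimitPoint c (β + 1) := by
  rintro ⟨-, h⟩
  obtain ⟨ξ, -, h1, h2⟩ := h β (by rw [Ordinal.add_one_eq_succ]; exact Order.lt_succ β)
  rw [Ordinal.add_one_eq_succ, Order.lt_succ_iff] at h2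
  exact absurd h1 (not_lt.mpr h2)

theorem cSet_isClosedCofinal {α : Ordinal} {e : ℕ → Ordinal} (he : StrictMono e)
    (helt : ∀ n, e n < α) (hesucc : ∀ n, ∃ β, e n = β + 1) (heub : ∀ β < α, ∃ n, β < e n)
    {A : Set ℕ} (hA : A.Infinite) : IsClosedCofinalIn (cSet e A) α := by
  refine ⟨?_, ?_, ?_⟩
  · rintro ξ ⟨n, -, -, h⟩
    exact h.trans (helt _)
  · intro β hβ
    obtain ⟨m, hm⟩ := heub β hβ
    obtain ⟨n, hnA, hn⟩ := hA.exists_gt m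
    exact ⟨e n, ⟨n, hnA, le_rfl, he (Nat.lt_succ_self n)⟩, hm.trans_le (he.monotone hn.le)⟩
  · intro γ hγα hlp
    obtain ⟨hγ0, hcl⟩ := hlp
    by_cases h0 : γ ≤ e 0
    · obtain ⟨ξ, ⟨n, -, hn1, -⟩, -, hξγ⟩ := hcl 0 hγ0
      exact absurd (hξγ.trans_le h0) (not_lt.mpr ((he.monotone (Nat.zero_le n)).trans hn1))
    · push_neg at h0
      obtain ⟨n, hn1, hn2⟩ := locate h0.le (heub γ hγα)
      have hne : γ ≠ e n := by
        rintro rfl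
        obtain ⟨β, hβ⟩ := hesucc n
        exact not_isLimitPoint_succ (cSet e A) β (by rw [← hβ]; exact ⟨hγ0, hcl⟩)
      have hlt : e n < γ := lt_of_le_of_ne hn1 (Ne.symm hne)
      obtain ⟨ξ, ⟨k, hkA, hk1, hk2⟩, hξ1, hξ2⟩ := hcl (e n) hlt
      have hkn : k = n := interval_unique he hξ1.le (hξ2.trans hn2) hk1 hk2
      exact ⟨n, hkn ▸ hkA, hlt.le, hn2⟩

end MeasuringProof

/-- If there is a splitting family of size κ then Measuring_κ fails. -/
theorem measuring_kappa_fails_of_splitting (κ : Cardinal)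
    (S : Set (Set ℕ)) (hS : IsSplittingFamily S) (hcard : Cardinal.mk S = κ) :
    ∃ 𝒞 : Ordinal → Set (Set Ordinal),
      (∀ α, α < omega1 → Order.IsSuccLimit α →
        Cardinal.mk (𝒞 α) ≤ Cardinal.lift.{1} κ ∧ ∀ c ∈ 𝒞 α, IsClosedCofinalIn c α) ∧
      ∀ D : Set Ordinal, IsClubω₁ D →
        ∃ δ, δ < omega1 ∧ IsLimitPoint D δ ∧
          ∃ c ∈ 𝒞 δ, ¬ Measures (D ∩ Set.Iio δ) c δ := by
  classical
  have hlad : ∀ α : Ordinal, ∃ e : ℕ → Ordinal,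
      α < omega1 → Order.IsSuccLimit α → (StrictMono e ∧ (∀ n, e n < α) ∧ (∀ n, ∃ β, e n = β + 1) ∧
        ∀ β < α, ∃ n, β < e n) := by
    intro α
    by_cases h : α < omega1 ∧ Order.IsSuccLimit α
    · obtain ⟨e, he⟩ := MeasuringProof.exists_ladder h.1 h.2
      exact ⟨e, fun _ _ => he⟩
    · exact ⟨fun _ => 0, fun h1 h2 => absurd ⟨h1, h2⟩ h⟩
  choose E hE using hlad
  have hS' : {A | A ∈ S ∧ A.Infinite} ⊆ S := fun A hA => hA.1
  refine ⟨fun α => MeasuringProof.cSet (E α) '' {A | A ∈ S ∧ A.Infinite}, ?_, ?_⟩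
  · intro α hα hlim
    obtain ⟨hmono, hlt, hsucc, hub⟩ := hE α hα hlim
    constructor
    · have h1 : Cardinal.lift.{0}
          (Cardinal.mk (MeasuringProof.cSet (E α) '' {A | A ∈ S ∧ A.Infinite}))
          ≤ Cardinal.lift.{1} (Cardinal.mk {A | A ∈ S ∧ A.Infinite}) :=
        Cardinal.mk_image_le_lift
      rw [Cardinal.lift_id'] at h1
      refine h1.trans ?_
      rw [← hcard]
      exact Cardinal.lift_le.mpr (Cardinal.mk_le_mk_of_subset hS')
    · rintro c ⟨A, ⟨hAS, hAinf⟩, rfl⟩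
      exact MeasuringProof.cSet_isClosedCofinal hmono hlt hsucc hub hAinf
  · intro D hD
    obtain ⟨hD1, hD2, hD3⟩ := hD
    have h0ω : (0 : Ordinal) < omega1 := by
      rw [omega1, Cardinal.lt_ord]
      simpa using Cardinal.aleph_pos 1
    have hFex : ∀ β : Ordinal, ∃ ξ, β < omega1 → ξ ∈ D ∧ β < ξ := by
      intro β
      by_cases h : β < omega1
      · obtain ⟨ξ, h1, h2⟩ := hD2 β h
        exact ⟨ξ, fun _ => ⟨h1, h2⟩⟩
      · exact ⟨0, fun hh => absurd hh h⟩
    choose F hF using hFex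
    set g : ℕ → Ordinal := fun n => Nat.rec (F 0) (fun _ ih => F ih) n with hg
    have hgD : ∀ n, g n ∈ D ∧ g n < g (n + 1) := by
      have key : ∀ n, g n ∈ D := by
        intro n
        induction n with
        | zero => exact (hF 0 h0ω).1
        | succ n ih => exact (hF (g n) (hD1 _ ih)).1
      exact fun n => ⟨key n, (hF (g n) (hD1 _ (key n))).2⟩
    set δ : Ordinal := ⨆ n, g n with hδ
    have hgδ : ∀ n, g n < δ := fun n => lt_of_lt_of_le (hgD n).2 (Ordinal.le_iSup g (n + 1))
    have hδω : δ < omega1 := by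
      show (⨆ n, g n) < (Cardinal.aleph 1).ord
      refine Cardinal.iSup_lt_ord_lift_of_isRegular Cardinal.isRegular_aleph_one ?_ ?_
      · simpa using Cardinal.aleph0_lt_aleph_one
      · exact fun n => hD1 _ (hgD n).1
    have hδ0 : (0 : Ordinal) < δ := lt_of_le_of_lt zero_le (hgδ 0)
    have hδlp : IsLimitPoint D δ := by
      refine ⟨hδ0, ?_⟩
      intro β hβ
      obtain ⟨n, hn⟩ := Ordinal.lt_iSup_iff.mp hβ
      exact ⟨g n, (hgD n).1, hn, hgδ n⟩
    have hδlim : Order.IsSuccLimit δ := by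
      refine Ordinal.isSuccLimit_iff.mpr ⟨hδ0.ne', Order.isSuccPrelimit_of_succ_lt ?_⟩
      intro a ha
      obtain ⟨n, hn⟩ := Ordinal.lt_iSup_iff.mp ha
      exact lt_of_le_of_lt (Order.succ_le_of_lt hn) (hgδ n)
    obtain ⟨hemono, helt, hesucc, heub⟩ := hE δ hδω hδlim
    set e := E δ with he
    set x : Set ℕ := {n | ∃ γ, γ ∈ D ∧ γ < δ ∧ e n ≤ γ ∧ γ < e (n + 1)} with hx
    have hxkey : ∀ N : ℕ, ∃ n, n ∈ x ∧ N ≤ n := by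
      intro N
      obtain ⟨γ, hγD, hγ1, hγ2⟩ := hδlp.2 (e N) (helt N)
      obtain ⟨n, hn1, hn2⟩ :=
        MeasuringProof.locate ((hemono.monotone (Nat.zero_le N)).trans hγ1.le) (heub γ hγ2)
      refine ⟨n, ⟨γ, hγD, hγ2, hn1, hn2⟩, ?_⟩
      by_contra hcon
      push_neg at hcon
      exact absurd hn2 (not_lt.mpr ((hemono.monotone (Nat.succ_le_of_lt hcon)).trans hγ1.le))
    have hxinf : x.Infinite := by
      refine Set.infinite_of_forall_exists_gt fun a => ?_
      obtain ⟨n, hn1, hn2⟩ := hxkey (a + 1)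
      exact ⟨n, hn1, by omega⟩
    obtain ⟨A, hAS, hxA, hxd⟩ := hS x hxinf
    have hAinf : A.Infinite := hxA.mono Set.inter_subset_right
    refine ⟨δ, hδω, hδlp, MeasuringProof.cSet e A, ⟨A, ⟨hAS, hAinf⟩, rfl⟩, ?_⟩
    rintro ⟨β, hβδ, hcase⟩
    obtain ⟨m, hm⟩ := heub β hβδ
    rcases hcase with hsub | hdis
    · obtain ⟨n, hnx, hnm⟩ := hxd.exists_gt m
      obtain ⟨γ, hγD, hγδ, hn1, hn2⟩ := hnx.1
      have hβγ : β ≤ γ := ((hm.trans_le (hemono.monotone hnm.le)).trans_le hn1).le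
      have hγc : γ ∈ MeasuringProof.cSet e A := hsub ⟨⟨hγD, hγδ⟩, hβγ⟩
      obtain ⟨k, hkA, hk1, hk2⟩ := hγc
      exact hnx.2 (MeasuringProof.interval_unique hemono hn1 hn2 hk1 hk2 ▸ hkA)
    · obtain ⟨n, hnx, hnm⟩ := hxA.exists_gt m
      obtain ⟨γ, hγD, hγδ, hn1, hn2⟩ := hnx.1
      have hβγ : β ≤ γ := ((hm.trans_le (hemono.monotone hnm.le)).trans_le hn1).le
      exact hdis γ ⟨hγD, hγδ⟩ hβγ ⟨n, hnx.2, hn1, hn2⟩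
end
end

section
/- For any cardinal κ ≥ 2, Measuring_{<κ} implies the failure of VWCG_{<κ}: if every sequence ⟨𝒞_α⟩ of families of fewer than κ closed cofinal subsets of α admits a measuring club, then there is no sequence ⟨ℒ_α : α ∈ ω₁ ∩ Lim⟩, with each ℒ_α a nonempty family of fewer than κ cofinal subsets of α of order type ω, such that for every club D ⊆ ω₁ there exist a limit ordinal α and L ∈ ℒ_α with L ∩ D infinite. -/
noncomputable section
open Set

/-- `D` is a club subset of `ω₁`. -/
def IsClubOmega1 (D : Set Ordinal) : Prop :=
  (∀ ξ ∈ D, ξ < omega1) ∧ (∀ β < omega1, ∃ ξ ∈ D, β < ξ) ∧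
    (∀ δ < omega1, IsLimitPoint D δ → δ ∈ D)

/-- Measuring_{<κ}. -/
def MeasuringLt (κ : Cardinal.{0}) : Prop :=
  ∀ 𝒞 : Ordinal → Set (Set Ordinal),
    (∀ α, α < omega1 → Order.IsSuccLimit α →
      Cardinal.mk (𝒞 α) < Cardinal.lift.{1,0} κ ∧ ∀ c ∈ 𝒞 α, IsClosedCofinalIn c α) →
    ∃ D : Set Ordinal, IsClubOmega1 D ∧
      ∀ δ, δ < omega1 → IsLimitPoint D δ → ∀ c ∈ 𝒞 δ, Measures (D ∩ Set.Iio δ) c δ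

/-- VWCG_{<κ}. -/
def VWCGLt (κ : Cardinal.{0}) : Prop :=
  ∃ ℒ : Ordinal → Set (Set Ordinal),
    (∀ α, α < omega1 → Order.IsSuccLimit α →
      (ℒ α).Nonempty ∧ Cardinal.mk (ℒ α) < Cardinal.lift.{1,0} κ ∧
      ∀ L ∈ ℒ α, (∀ ξ ∈ L, ξ < α) ∧ (∀ β < α, ∃ ξ ∈ L, β < ξ) ∧ HasOrderTypeOmega L) ∧
    ∀ D : Set Ordinal, IsClubOmega1 D →
      ∃ α, α < omega1 ∧ Order.IsSuccLimit α ∧ ∃ L ∈ ℒ α, (L ∩ D).Infinite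

/-- If a set has points in every interval `(β', γ)` for `β' < γ`, then its intersection
with any interval `(β, γ)` with `β < γ` is infinite. -/
lemma infinite_inter_Ioo {S : Set Ordinal} {β γ : Ordinal} (hβ : β < γ)
    (hcof : ∀ β' < γ, ∃ ξ ∈ S, β' < ξ ∧ ξ < γ) : (S ∩ Set.Ioo β γ).Infinite := by
  intro hf
  obtain ⟨ξ0, hξ0S, hβξ0, hξ0γ⟩ := hcof β hβ
  have hne : (S ∩ Set.Ioo β γ).Nonempty := ⟨ξ0, hξ0S, hβξ0, hξ0γ⟩
  obtain ⟨m, hm, hmax⟩ := Set.Finite.exists_maximalFor id _ hf hne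
  obtain ⟨ξ, hξS, hmξ, hξγ⟩ := hcof m hm.2.2
  have hmem : ξ ∈ S ∩ Set.Ioo β γ := ⟨hξS, lt_trans hm.2.1 hmξ, hξγ⟩
  exact absurd (hmax hmem (le_of_lt hmξ)) (not_le_of_gt hmξ)

/-- For κ ≥ 2, Measuring_{<κ} implies the failure of VWCG_{<κ}. -/
theorem vwcg_fails_of_measuring (κ : Cardinal.{0}) (hκ : 2 ≤ κ) (hM : MeasuringLt κ) :
    ¬ VWCGLt κ := by
  rintro ⟨ℒ, hprop, hguess⟩
  -- every member of `ℒ α` is closed cofinal in `α`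
  have hcc : ∀ α, α < omega1 → Order.IsSuccLimit α →
      Cardinal.mk (ℒ α) < Cardinal.lift.{1,0} κ ∧ ∀ c ∈ ℒ α, IsClosedCofinalIn c α := by
    intro α hα hlim
    obtain ⟨_, hcard, hL⟩ := hprop α hα hlim
    refine ⟨hcard, fun c hc => ?_⟩
    obtain ⟨hlt, hcof, hot⟩ := hL c hc
    refine ⟨hlt, hcof, fun γ hγ hγlp => ?_⟩
    exfalso
    have hinf : (c ∩ Set.Ioo 0 γ).Infinite := infinite_inter_Ioo hγlp.1 hγlp.2
    obtain ⟨ξ0, hξ0c, hγξ0⟩ := hcof γ hγ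
    have hfin : (c ∩ Set.Iio ξ0).Finite := hot.2 ξ0 hξ0c
    exact hinf (hfin.subset (fun x hx => ⟨hx.1, lt_trans hx.2.2 hγξ0⟩))
  obtain ⟨D, hD, hmeas⟩ := hM ℒ hcc
  -- D' : the set of limit points of D below ω₁
  set D' : Set Ordinal := {δ | δ < omega1 ∧ IsLimitPoint D δ} with hD'def
  have hD'subD : ∀ ξ ∈ D', ξ ∈ D := fun ξ hξ => hD.2.2 ξ hξ.1 hξ.2
  have hD'club : IsClubOmega1 D' := by
    refine ⟨fun ξ hξ => hξ.1, ?_, ?_⟩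
    · -- unbounded
      intro β hβ
      have next : ∀ b, b < omega1 → ∃ ξ, ξ ∈ D ∧ b < ξ ∧ ξ < omega1 := by
        intro b hb
        obtain ⟨ξ, hξD, hbξ⟩ := hD.2.1 b hb
        exact ⟨ξ, hξD, hbξ, hD.1 ξ hξD⟩
      choose F hFD hFgt hFlt using next
      let f : ℕ → {x : Ordinal // x < omega1} := fun n =>
        Nat.rec ⟨F β hβ, hFlt β hβ⟩ (fun _ p => ⟨F p.1 p.2, hFlt p.1 p.2⟩) n
      have hfD : ∀ n, (f n).1 ∈ D := by
        intro n; cases n with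
        | zero => exact hFD β hβ
        | succ k => exact hFD _ _
      have hfmono : ∀ n, (f n).1 < (f (n + 1)).1 := fun n => hFgt _ _
      set δ : Ordinal := ⨆ n : ℕ, (f n).1 with hδdef
      have hfleδ : ∀ n, (f n).1 ≤ δ := fun n =>
        Ordinal.le_iSup (fun n : ℕ => (f n).1) n
      have hfltδ : ∀ n, (f n).1 < δ := fun n =>
        lt_of_lt_of_le (hfmono n) (hfleδ (n + 1))
      have hδω : δ < omega1 := by
        refine Cardinal.iSup_lt_ord_of_isRegular Cardinal.isRegular_aleph_one ?_ (fun n => (f n).2)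
        simpa using Cardinal.aleph0_lt_aleph_one
      have hδlp : IsLimitPoint D δ := by
        refine ⟨lt_of_le_of_lt (zero_le (a := (f 0).1)) (hfltδ 0), fun b hb => ?_⟩
        obtain ⟨n, hn⟩ := Ordinal.lt_iSup_iff.1 hb
        exact ⟨(f n).1, hfD n, hn, hfltδ n⟩
      exact ⟨δ, ⟨hδω, hδlp⟩, lt_trans (hFgt β hβ) (hfltδ 0)⟩
    · -- closed
      intro δ hδω hlp
      refine ⟨hδω, hlp.1, fun b hb => ?_⟩
      obtain ⟨ξ, hξD', hbξ, hξδ⟩ := hlp.2 b hb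
      obtain ⟨η, hηD, hbη, hηξ⟩ := hξD'.2.2 b hbξ
      exact ⟨η, hηD, hbη, lt_trans hηξ hξδ⟩
  -- apply the guessing property to D'
  obtain ⟨α, hαω, hαlim, L, hLℒ, hLD'inf⟩ := hguess D' hD'club
  obtain ⟨_, _, hLprop⟩ := hprop α hαω hαlim
  obtain ⟨hLlt, hLcof, hLot⟩ := hLprop L hLℒ
  -- L ∩ D' is cofinal in α
  have hcof' : ∀ β < α, ∃ ξ ∈ L ∩ D', β < ξ := by
    intro β hβ
    by_contra h
    push_neg at h
    obtain ⟨ξ0, hξ0, hβξ0⟩ := hLcof β hβ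
    have hsub : L ∩ D' ⊆ L ∩ Set.Iio ξ0 := fun x hx =>
      ⟨hx.1, lt_of_le_of_lt (h x hx) hβξ0⟩
    exact hLD'inf ((hLot.2 ξ0 hξ0).subset hsub)
  -- α is a limit point of D
  have hαlp : IsLimitPoint D α := by
    refine ⟨hαlim.pos, fun β hβ => ?_⟩
    obtain ⟨ξ, ⟨hξL, hξD'⟩, hβξ⟩ := hcof' β hβ
    exact ⟨ξ, hD'subD ξ hξD', hβξ, hLlt ξ hξL⟩
  obtain ⟨β, hβα, hcase⟩ := hmeas α hαω hαlp L hLℒ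
  obtain ⟨γ, ⟨hγL, hγD'⟩, hβγ⟩ := hcof' β hβα
  have hγα : γ < α := hLlt γ hγL
  rcases hcase with hsub | hdisj
  · -- tail of D below α contained in L: contradicts order type ω
    have hT : (D ∩ Set.Ioo β γ).Infinite := infinite_inter_Ioo hβγ hγD'.2.2
    have hTsub : D ∩ Set.Ioo β γ ⊆ L ∩ Set.Iio γ := by
      rintro x ⟨hxD, hβx, hxγ⟩
      exact ⟨hsub ⟨⟨hxD, lt_trans hxγ hγα⟩, le_of_lt hβx⟩, hxγ⟩
    exact hT ((hLot.2 γ hγL).subset hTsub)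
  · -- tail of D below α disjoint from L: but γ ∈ L ∩ D
    exact hdisj γ ⟨hD'subD γ hγD', hγα⟩ (le_of_lt hβγ) hγL
end
end

section
/- If ⟨r_α : α < 𝔟⟩ is an unbounded family in ω^ω (no single function eventually dominates all r_α), then VWCG_𝔟 holds: there is a sequence ⟨ℒ_δ : δ ∈ ω₁ ∩ Lim⟩ such that each ℒ_δ is a family of at most 𝔟 many cofinal subsets of δ of order type ω, and for every club C ⊆ ω₁ there exist δ and L ∈ ℒ_δ with L ∩ C infinite. -/
noncomputable section
open Set

/-- `D` is a club subset of `ω₁`. -/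
def IsClub' (D : Set Ordinal) : Prop :=
  (∀ ξ ∈ D, ξ < omega1) ∧ (∀ β < omega1, ∃ ξ ∈ D, β < ξ) ∧
    (∀ δ < omega1, IsLimitPoint D δ → δ ∈ D)

/-- g eventually dominates f. -/
def EvDominates (g f : ℕ → ℕ) : Prop := ∃ m, ∀ n > m, f n < g n

/-- An unbounded family in ω^ω. -/
def IsUnboundedFamily (B : Set (ℕ → ℕ)) : Prop := ¬ ∃ g, ∀ f ∈ B, EvDominates g f

/-- The bounding number 𝔟. -/
noncomputable def boundingNumber : Cardinal.{0} :=
  sInf {c | ∃ B : Set (ℕ → ℕ), IsUnboundedFamily B ∧ Cardinal.mk B = c}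

/-! ### Auxiliary material -/

lemma ord_lt_add_one (a : Ordinal) : a < a + 1 := by
  rw [Ordinal.add_one_eq_succ]; exact Order.lt_succ a

/-- The ladder obtained from an enumeration `E`. -/
def lad (E : ℕ → Ordinal) : ℕ → Ordinal
  | 0 => 0
  | n + 1 => max (lad E n) (E n) + 1

lemma lad_lt_succ (E : ℕ → Ordinal) (n : ℕ) : lad E n < lad E (n + 1) :=
  lt_of_le_of_lt (le_max_left _ _) (ord_lt_add_one _)

lemma lad_strictMono (E : ℕ → Ordinal) : StrictMono (lad E) :=
  strictMono_nat_of_lt_succ (lad_lt_succ E)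

lemma E_lt_lad (E : ℕ → Ordinal) (n : ℕ) : E n < lad E (n + 1) :=
  lt_of_le_of_lt (le_max_right _ _) (ord_lt_add_one _)

lemma lad_lt {E : ℕ → Ordinal} {δ : Ordinal} (hδ : Order.IsSuccLimit δ) (hE : ∀ n, E n < δ) :
    ∀ n, lad E n < δ
  | 0 => hδ.pos
  | n + 1 => by
      have h1 : max (lad E n) (E n) < δ := max_lt (lad_lt hδ hE n) (hE n)
      show max (lad E n) (E n) + 1 < δ
      rw [Ordinal.add_one_eq_succ]
      exact hδ.succ_lt h1

lemma lad_cofinal {E : ℕ → Ordinal} {δ : Ordinal}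
    (hE2 : ∀ ξ < δ, ∃ n, E n = ξ) : ∀ β < δ, ∃ n, β < lad E (n + 1) := by
  intro β hβ
  obtain ⟨n, hn⟩ := hE2 β hβ
  exact ⟨n, hn ▸ E_lt_lad E n⟩

lemma lad_interval {E : ℕ → Ordinal} {δ : Ordinal}
    (hE2 : ∀ ξ < δ, ∃ n, E n = ξ) {ξ : Ordinal} (hξ : ξ < δ) :
    ∃ n, lad E n ≤ ξ ∧ ξ < lad E (n + 1) := by
  classical
  have hex : ∃ m, ξ < lad E (m + 1) := lad_cofinal hE2 ξ hξ
  refine ⟨Nat.find hex, ?_, Nat.find_spec hex⟩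
  cases h : Nat.find hex with
  | zero => exact zero_le
  | succ k =>
      have := Nat.find_min hex (show k < Nat.find hex by omega)
      exact not_lt.mp this

/-- The guessing sets. -/
def Lset (E : ℕ → Ordinal) (s : ℕ → ℕ) : Set Ordinal :=
  (Set.range fun n => lad E (n + 1)) ∪
    {ξ | ∃ n i, lad E n ≤ ξ ∧ ξ < lad E (n + 1) ∧ i < s n ∧ E i = ξ}

section LsetProps

variable {E : ℕ → Ordinal} {δ : Ordinal} {s : ℕ → ℕ}

lemma Lset_subset (hδ : Order.IsSuccLimit δ) (hE1 : ∀ n, E n < δ) :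
    ∀ ξ ∈ Lset E s, ξ < δ := by
  rintro ξ (⟨n, rfl⟩ | ⟨n, i, _, h2, _, _⟩)
  · exact lad_lt hδ hE1 _
  · exact lt_trans h2 (lad_lt hδ hE1 _)

lemma Lset_cofinal (hE2 : ∀ ξ < δ, ∃ n, E n = ξ) :
    ∀ β < δ, ∃ ξ ∈ Lset E s, β < ξ := by
  intro β hβ
  obtain ⟨n, hn⟩ := lad_cofinal hE2 β hβ
  exact ⟨lad E (n + 1), Or.inl ⟨n, rfl⟩, hn⟩

lemma Lset_initial_finite (hE2 : ∀ ξ < δ, ∃ n, E n = ξ) (hs : Monotone s)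
    {γ : Ordinal} (hγ : γ < δ) : (Lset E s ∩ Set.Iio γ).Finite := by
  obtain ⟨N, hN⟩ := lad_cofinal hE2 γ hγ
  have hsub : Lset E s ∩ Set.Iio γ ⊆
      ((fun n => lad E (n + 1)) '' Set.Iio (N + 1)) ∪ (E '' Set.Iio (s (N + 1))) := by
    rintro ξ ⟨hL, (hξγ : ξ < γ)⟩
    rcases hL with ⟨n, rfl⟩ | ⟨n, i, h1, _, h3, rfl⟩
    · left
      have : lad E (n + 1) < lad E (N + 1 + 1) := lt_trans hξγ (lt_trans hN (lad_lt_succ E _))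
      have hnN : n + 1 < N + 1 + 1 := (lad_strictMono E).lt_iff_lt.mp this
      exact ⟨n, Set.mem_Iio.mpr (by omega), rfl⟩
    · right
      have : lad E n < lad E (N + 1) := lt_of_le_of_lt h1 (lt_trans hξγ hN)
      have hnN : n < N + 1 := (lad_strictMono E).lt_iff_lt.mp this
      exact ⟨i, Set.mem_Iio.mpr (lt_of_lt_of_le h3 (hs (by omega))), rfl⟩
  exact Set.Finite.subset (Set.Finite.union
    ((Set.finite_Iio _).image _) ((Set.finite_Iio _).image _)) hsub

lemma Lset_infinite : (Lset E s).Infinite := by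
  have hinj : Function.Injective fun n => lad E (n + 1) := by
    intro a b hab
    have := (lad_strictMono E).injective hab
    omega
  exact (Set.infinite_range_of_injective hinj).mono Set.subset_union_left

lemma Lset_otp (hδ : Order.IsSuccLimit δ) (hE1 : ∀ n, E n < δ) (hE2 : ∀ ξ < δ, ∃ n, E n = ξ)
    (hs : Monotone s) : HasOrderTypeOmega (Lset E s) := by
  refine ⟨Lset_infinite, fun γ hγ => ?_⟩
  exact Lset_initial_finite hE2 hs (Lset_subset hδ hE1 γ hγ)

end LsetProps

lemma omega1_pos : (0 : Ordinal) < omega1 := by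
  rw [omega1, ← Cardinal.ord_zero]
  exact Cardinal.ord_lt_ord.mpr (lt_of_le_of_lt zero_le Cardinal.aleph0_lt_aleph_one)

/-- From an unbounded family of size 𝔟 one gets a very weak club guessing
sequence with at most 𝔟 many guessing sets at each level. -/
theorem vwcg_b_of_unbounded_family (ι : Type) (hι : Cardinal.mk ι = boundingNumber)
    (r : ι → ℕ → ℕ) (hr : IsUnboundedFamily (Set.range r)) :
    ∃ ℒ : Ordinal → Set (Set Ordinal),
      (∀ δ, δ < omega1 → Order.IsSuccLimit δ →
        Cardinal.mk (ℒ δ) ≤ Cardinal.lift.{1,0} boundingNumber ∧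
        ∀ L ∈ ℒ δ, (∀ ξ ∈ L, ξ < δ) ∧ (∀ β < δ, ∃ ξ ∈ L, β < ξ) ∧ HasOrderTypeOmega L) ∧
      ∀ C : Set Ordinal, IsClub' C →
        ∃ δ, δ < omega1 ∧ Order.IsSuccLimit δ ∧ ∃ L ∈ ℒ δ, (L ∩ C).Infinite := by
  classical
  -- the monotonized family
  set S : ι → ℕ → ℕ := fun α n => (Finset.range (n + 1)).sup (r α) with hS
  have hSmono : ∀ α, Monotone (S α) := by
    intro α a b hab
    exact Finset.sup_mono (Finset.range_subset_range.mpr (by omega))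
  have hrS : ∀ α n, r α n ≤ S α n := by
    intro α n
    exact Finset.le_sup (Finset.mem_range.mpr (Nat.lt_succ_self n))
  -- enumerations of limit ordinals below ω₁
  have hEx : ∀ δ : Ordinal, δ < omega1 → Order.IsSuccLimit δ →
      ∃ E : ℕ → Ordinal, (∀ n, E n < δ) ∧ ∀ ξ < δ, ∃ n, E n = ξ := by
    intro δ h1 h2
    have hcard : δ.card ≤ Cardinal.aleph0 := by
      have : δ.card < Cardinal.aleph 1 := Cardinal.lt_ord.mp h1
      rw [← Cardinal.succ_aleph0] at this
      exact Order.lt_succ_iff.mp this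
    have hcount : Countable ↥(Set.Iio δ) := by
      rw [← Cardinal.mk_le_aleph0_iff, Ordinal.mk_Iio_ordinal]
      exact Cardinal.lift_le_aleph0.mpr hcard
    have hne : Nonempty ↥(Set.Iio δ) := ⟨⟨0, h2.pos⟩⟩
    obtain ⟨f, hf⟩ := exists_surjective_nat ↥(Set.Iio δ)
    refine ⟨fun n => (f n).1, fun n => (f n).2, fun ξ hξ => ?_⟩
    obtain ⟨n, hn⟩ := hf ⟨ξ, hξ⟩
    exact ⟨n, congrArg Subtype.val hn⟩
  set E : Ordinal → ℕ → Ordinal := fun δ =>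
    if h : δ < omega1 ∧ Order.IsSuccLimit δ then (hEx δ h.1 h.2).choose else fun _ => 0 with hE
  have hE1 : ∀ δ (h : δ < omega1 ∧ Order.IsSuccLimit δ), ∀ n, E δ n < δ := by
    intro δ h n
    rw [hE]; simp only [dif_pos h]
    exact (hEx δ h.1 h.2).choose_spec.1 n
  have hE2 : ∀ δ (h : δ < omega1 ∧ Order.IsSuccLimit δ), ∀ ξ < δ, ∃ n, E δ n = ξ := by
    intro δ h ξ hξ
    rw [hE]; simp only [dif_pos h]
    exact (hEx δ h.1 h.2).choose_spec.2 ξ hξ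
  -- the guessing sequence
  refine ⟨fun δ => if h : δ < omega1 ∧ Order.IsSuccLimit δ
    then Set.range (fun α : ι => Lset (E δ) (S α)) else ∅, ?_, ?_⟩
  · intro δ h1 h2
    have h : δ < omega1 ∧ Order.IsSuccLimit δ := ⟨h1, h2⟩
    simp only [dif_pos h]
    constructor
    · have hle := Cardinal.mk_range_le_lift (f := fun α : ι => Lset (E δ) (S α))
      simpa [hι] using hle
    · rintro L ⟨α, rfl⟩
      exact ⟨Lset_subset h2 (hE1 δ h), Lset_cofinal (hE2 δ h),
        Lset_otp h2 (hE1 δ h) (hE2 δ h) (hSmono α)⟩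
  · intro C hC
    -- build a strictly increasing ω-chain in C
    have step : ∀ β : Ordinal, β < omega1 → ∃ ξ, ξ ∈ C ∧ β < ξ ∧ ξ < omega1 := by
      intro β hβ
      obtain ⟨ξ, hξC, hβξ⟩ := hC.2.1 β hβ
      exact ⟨ξ, hξC, hβξ, hC.1 ξ hξC⟩
    let T := {x : Ordinal // x ∈ C ∧ x < omega1}
    have x0 : T := ⟨(step 0 omega1_pos).choose, (step 0 omega1_pos).choose_spec.1,
      (step 0 omega1_pos).choose_spec.2.2⟩
    let F : T → T := fun x => ⟨(step x.1 x.2.2).choose, (step x.1 x.2.2).choose_spec.1,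
      (step x.1 x.2.2).choose_spec.2.2⟩
    have hF : ∀ x : T, x.1 < (F x).1 := fun x => (step x.1 x.2.2).choose_spec.2.1
    let c : ℕ → Ordinal := fun n => (F^[n] x0).1
    have hcC : ∀ n, c n ∈ C := fun n => (F^[n] x0).2.1
    have hcω : ∀ n, c n < omega1 := fun n => (F^[n] x0).2.2
    have hmono : StrictMono c := by
      apply strictMono_nat_of_lt_succ
      intro n
      show (F^[n] x0).1 < (F^[n + 1] x0).1
      rw [Function.iterate_succ_apply']
      exact hF _
    -- the guessed level
    set δ : Ordinal := ⨆ n, c n with hδdef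
    have hbdd : BddAbove (Set.range c) := Ordinal.bddAbove_range c
    have hlub : ∀ β, β < δ ↔ ∃ n, β < c n := fun β => lt_ciSup_iff hbdd
    have hcδ : ∀ n, c n < δ := fun n => (hlub (c n)).mpr ⟨n + 1, hmono (Nat.lt_succ_self n)⟩
    have hδω1 : δ < omega1 := by
      refine Ordinal.iSup_lt_ord ?_ hcω
      show Cardinal.mk ℕ < (Cardinal.aleph 1).ord.cof
      rw [Cardinal.isRegular_aleph_one.cof_eq, Cardinal.mk_nat]
      exact Cardinal.aleph0_lt_aleph_one
    have hδlim : Order.IsSuccLimit δ := by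
      refine Ordinal.isSuccLimit_iff.mpr ⟨?_, Order.isSuccPrelimit_of_succ_lt ?_⟩
      · exact pos_iff_ne_zero.mp (lt_of_le_of_lt zero_le (hcδ 0))
      · intro a ha
        obtain ⟨n, hn⟩ := (hlub a).mp ha
        exact lt_of_le_of_lt (Order.succ_le_of_lt hn) (hcδ n)
    have h : δ < omega1 ∧ Order.IsSuccLimit δ := ⟨hδω1, hδlim⟩
    have he1 := hE1 δ h
    have he2 := hE2 δ h
    -- interval and index functions for the chain
    have hint : ∀ k, ∃ n, lad (E δ) n ≤ c k ∧ c k < lad (E δ) (n + 1) :=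
      fun k => lad_interval he2 (hcδ k)
    set itv : ℕ → ℕ := fun k => (hint k).choose with hitv
    have hint1 : ∀ k, lad (E δ) (itv k) ≤ c k := fun k => (hint k).choose_spec.1
    have hint2 : ∀ k, c k < lad (E δ) (itv k + 1) := fun k => (hint k).choose_spec.2
    have hidx : ∀ k, ∃ i, E δ i = c k := fun k => he2 (c k) (hcδ k)
    set idx : ℕ → ℕ := fun k => (hidx k).choose with hidxdef
    have hidx' : ∀ k, E δ (idx k) = c k := fun k => (hidx k).choose_spec
    -- the interval indices of the chain are unbounded
    have hku : ∀ n, ∃ k, n ≤ itv k := by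
      intro n
      have : lad (E δ) n < δ := lad_lt hδlim he1 n
      obtain ⟨k, hk⟩ := (hlub _).mp this
      have : lad (E δ) n < lad (E δ) (itv k + 1) := lt_trans hk (hint2 k)
      have := (lad_strictMono (E δ)).lt_iff_lt.mp this
      exact ⟨k, by omega⟩
    set kf : ℕ → ℕ := fun n => (hku n).choose with hkf
    have hkf' : ∀ n, n ≤ itv (kf n) := fun n => (hku n).choose_spec
    -- use unboundedness of the family
    set g : ℕ → ℕ := fun n => idx (kf n) + 1 with hg
    have hα : ∃ α : ι, ∀ m, ∃ n > m, g n ≤ r α n := by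
      by_contra hcon
      push_neg at hcon
      apply hr
      refine ⟨g, ?_⟩
      rintro f ⟨α, rfl⟩
      obtain ⟨m, hm⟩ := hcon α
      exact ⟨m, fun n hn => by
        have := hm n hn
        omega⟩
    obtain ⟨α, hα⟩ := hα
    refine ⟨δ, hδω1, hδlim, Lset (E δ) (S α), ?_, ?_⟩
    · simp only [dif_pos h]
      exact ⟨α, rfl⟩
    · -- key: for each good n, c (kf n) ∈ Lset ∩ C and is above lad n
      have hkey : ∀ n, g n ≤ r α n →
          c (kf n) ∈ Lset (E δ) (S α) ∩ C ∧ lad (E δ) n ≤ c (kf n) := by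
        intro n hn
        have hidxlt : idx (kf n) < S α (itv (kf n)) := by
          have h1 : idx (kf n) < g n := Nat.lt_succ_self _
          have h2 : g n ≤ S α n := le_trans hn (hrS α n)
          exact lt_of_lt_of_le h1 (le_trans h2 (hSmono α (hkf' n)))
        refine ⟨⟨Or.inr ⟨itv (kf n), idx (kf n), hint1 _, hint2 _, hidxlt, hidx' _⟩,
          hcC _⟩, ?_⟩
        exact le_trans ((lad_strictMono (E δ)).monotone (hkf' n)) (hint1 _)
      -- the intersection is unbounded in δ, hence infinite
      have hunb : ∀ β < δ, ∃ x ∈ Lset (E δ) (S α) ∩ C, β < x := by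
        intro β hβ
        obtain ⟨m, hm⟩ := lad_cofinal he2 β hβ
        obtain ⟨n, hnm, hgn⟩ := hα (m + 1)
        obtain ⟨hmem, hge⟩ := hkey n hgn
        refine ⟨c (kf n), hmem, lt_of_lt_of_le ?_ hge⟩
        exact lt_of_lt_of_le hm ((lad_strictMono (E δ)).monotone (by omega))
      intro hfin
      obtain ⟨x0', hx0'⟩ : (Lset (E δ) (S α) ∩ C).Nonempty := by
        obtain ⟨x, hx, _⟩ := hunb 0 hδlim.pos
        exact ⟨x, hx⟩
      obtain ⟨a, haT, hamax⟩ := Set.exists_max_image _ id hfin ⟨x0', hx0'⟩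
      have haδ : a < δ := Lset_subset hδlim he1 a haT.1
      obtain ⟨x, hxT, hax⟩ := hunb a haδ
      exact absurd (hamax x hxT) (not_le.mpr hax)

end
end

section
/- Let δ < ω₁ be a limit ordinal, C_δ ⊆ δ cofinal of order type ω with increasing enumeration ⟨C_δ(n) : n < ω⟩, h_δ : ω → δ a bijection, and r : ω → ω. Define A = C_δ ∪ ⋃_{n<ω} (h_δ[r(n)] \ C_δ(n)), where h_δ[m] = {h_δ(k) : k < m} and X \ γ = {ξ ∈ X : ξ ≥ γ}. Then A has order type ω and sup(A) = δ. -/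
noncomputable section
open Set

/-- The set A = C_δ ∪ ⋃ n, (h[r n] \ C_δ(n)) has order type ω and supremum δ. -/
theorem A_order_type_omega (δ : Ordinal) (hδ : Order.IsSuccLimit δ) (hδω1 : δ < omega1)
    (C : ℕ → Ordinal) (hCmono : StrictMono C) (hClt : ∀ n, C n < δ)
    (hCcof : ∀ β < δ, ∃ n, β < C n)
    (h : ℕ → Ordinal) (hhlt : ∀ n, h n < δ) (hhinj : Function.Injective h)
    (hhsurj : ∀ ξ < δ, ∃ n, h n = ξ)
    (r : ℕ → ℕ) :
    HasOrderTypeOmega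
        (Set.range C ∪ ⋃ n, {ξ | ξ ∈ h '' Set.Iio (r n) ∧ C n ≤ ξ}) ∧
      (∀ ξ ∈ Set.range C ∪ ⋃ n, {ξ | ξ ∈ h '' Set.Iio (r n) ∧ C n ≤ ξ}, ξ < δ) ∧
      (∀ β < δ, ∃ ξ ∈ Set.range C ∪ ⋃ n, {ξ | ξ ∈ h '' Set.Iio (r n) ∧ C n ≤ ξ}, β < ξ) := by
  refine ⟨⟨?_, ?_⟩, ?_, ?_⟩
  · exact (Set.infinite_range_of_injective hCmono.injective).mono Set.subset_union_left
  · intro γ hγ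
    have hγδ : γ < δ := by
      rcases hγ with ⟨m, rfl⟩ | h2
      · exact hClt m
      · obtain ⟨n, ⟨k, _, rfl⟩, _⟩ := Set.mem_iUnion.mp h2
        exact hhlt k
    obtain ⟨N, hN⟩ := hCcof γ hγδ
    have hsub : (Set.range C ∪ ⋃ n, {ξ | ξ ∈ h '' Set.Iio (r n) ∧ C n ≤ ξ}) ∩ Set.Iio γ ⊆
        C '' Set.Iio N ∪ ⋃ n ∈ Set.Iio N, h '' Set.Iio (r n) := by
      rintro ξ ⟨hξA, hξγ⟩
      rcases hξA with ⟨m, rfl⟩ | h2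
      · exact Or.inl ⟨m, hCmono.lt_iff_lt.mp (lt_trans hξγ hN), rfl⟩
      · obtain ⟨n, hmem, hle⟩ := Set.mem_iUnion.mp h2
        exact Or.inr (Set.mem_biUnion
          (hCmono.lt_iff_lt.mp (lt_of_le_of_lt hle (lt_trans hξγ hN))) hmem)
    refine Set.Finite.subset (Set.Finite.union ((Set.finite_Iio N).image C) ?_) hsub
    exact (Set.finite_Iio N).biUnion (fun n _ => (Set.finite_Iio (r n)).image h)
  · intro ξ hξ
    rcases hξ with ⟨m, rfl⟩ | h2
    · exact hClt m
    · obtain ⟨n, ⟨k, _, rfl⟩, _⟩ := Set.mem_iUnion.mp h2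
      exact hhlt k
  · intro β hβ
    obtain ⟨n, hn⟩ := hCcof β hβ
    exact ⟨C n, Or.inl ⟨n, rfl⟩, hn⟩
end
end

section
/- Let δ < ω₁ be a limit ordinal, C_δ ⊆ δ cofinal of order type ω with increasing enumeration C_δ(n), h_δ : ω → δ a bijection, C ⊆ ω₁ a club with δ a limit point of C, and define g(n) = min{m < ω : h_δ(m) ∈ C and h_δ(m) ≥ C_δ(n)}. If r : ω → ω satisfies r(n) > g(n) for infinitely many n, then the set A = C_δ ∪ ⋃_{n<ω} (h_δ[r(n)] \ C_δ(n)) has infinite intersection with C. -/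
noncomputable section
open Set

/-- `D` is a club subset of `ω₁`. -/
def IsClubSet (D : Set Ordinal) : Prop :=
  (∀ ξ ∈ D, ξ < omega1) ∧ (∀ β < omega1, ∃ ξ ∈ D, β < ξ) ∧
    (∀ δ < omega1, IsLimitPoint D δ → δ ∈ D)

/-- If r(n) > g(n) infinitely often, where g(n) is least with h(g n) ∈ C above C_δ(n),
then A = C_δ ∪ ⋃ n, (h[r n] \ C_δ(n)) meets the club C in an infinite set. -/
theorem A_meets_club (δ : Ordinal) (hδ : Order.IsSuccLimit δ) (hδω1 : δ < omega1)
    (Cd : ℕ → Ordinal) (hCmono : StrictMono Cd) (hClt : ∀ n, Cd n < δ)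
    (hCcof : ∀ β < δ, ∃ n, β < Cd n)
    (h : ℕ → Ordinal) (hhlt : ∀ n, h n < δ) (hhinj : Function.Injective h)
    (hhsurj : ∀ ξ < δ, ∃ n, h n = ξ)
    (C : Set Ordinal) (hC : IsClubSet C) (hlim : IsLimitPoint C δ)
    (g : ℕ → ℕ)
    (hg : ∀ n, (h (g n) ∈ C ∧ Cd n ≤ h (g n)) ∧
      ∀ m, h m ∈ C → Cd n ≤ h m → g n ≤ m)
    (r : ℕ → ℕ) (hr : {n | g n < r n}.Infinite) :
    ((Set.range Cd ∪ ⋃ n, {ξ | ξ ∈ h '' Set.Iio (r n) ∧ Cd n ≤ ξ}) ∩ C).Infinite := by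
  set S := {n | g n < r n} with hS
  have hsub : (fun n => h (g n)) '' S ⊆
      (Set.range Cd ∪ ⋃ n, {ξ | ξ ∈ h '' Set.Iio (r n) ∧ Cd n ≤ ξ}) ∩ C := by
    rintro x ⟨n, hn, rfl⟩
    refine ⟨Or.inr (mem_iUnion.2 ⟨n, ⟨⟨g n, hn, rfl⟩, (hg n).1.2⟩⟩), (hg n).1.1⟩
  refine Set.Infinite.mono hsub ?_
  intro hfin
  have hne : ((fun n => h (g n)) '' S).Nonempty := by
    obtain ⟨n, hn⟩ := hr.nonempty
    exact ⟨h (g n), n, hn, rfl⟩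
  have hne' : hfin.toFinset.Nonempty := by
    rwa [Set.Finite.toFinset_nonempty]
  set β := hfin.toFinset.max' hne' with hβ
  have hβmem : β ∈ (fun n => h (g n)) '' S := by
    have := hfin.toFinset.max'_mem hne'
    rwa [Set.Finite.mem_toFinset] at this
  obtain ⟨n₀, hn₀, hβeq⟩ := hβmem
  have hβδ : β < δ := by rw [← hβeq]; exact hhlt _
  obtain ⟨m, hm⟩ := hCcof β hβδ
  obtain ⟨n, hnS, hnm⟩ := hr.exists_gt m
  have h1 : h (g n) ≤ β := by
    apply hfin.toFinset.le_max'
    rw [Set.Finite.mem_toFinset]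
    exact ⟨n, hnS, rfl⟩
  have h2 : Cd m ≤ Cd n := hCmono.monotone hnm.le
  exact absurd ((hm.trans_le h2).trans_le (hg n).1.2) (not_lt.2 h1)
end
end

section
/- Measuring implies Measuring_ω: if for every sequence ⟨c_α : α ∈ ω₁ ∩ Lim⟩ of closed cofinal subsets c_α ⊆ α there is a club D such that D ∩ α measures c_α for every limit point α of D, then for every sequence ⟨𝒞_α : α ∈ ω₁ ∩ Lim⟩, where each 𝒞_α is a countable family of closed cofinal subsets of α, there is a single club D ⊆ ω₁ such that for every limit point δ of D and every c ∈ 𝒞_δ, D ∩ δ measures c. -/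
noncomputable section
open Set

/-! ### Auxiliary lemmas -/

universe u v

lemma MOaux.sup_lt_omega1 (f : ℕ → Ordinal.{u}) (h : ∀ n, f n < omega1.{u}) :
    (⨆ n, f n) < omega1.{u} := by
  apply Ordinal.iSup_lt_ord_lift.{0, u} _ h
  rw [omega1, Cardinal.isRegular_aleph_one.cof_eq]
  simpa using Cardinal.aleph0_lt_aleph_one

/-- The intersection of countably many clubs is a club. -/
lemma MOaux.isClub_iInter (D : ℕ → Set Ordinal.{u}) (h : ∀ n, IsClubOmega1 (D n)) :
    IsClubOmega1 (⋂ n, D n) := by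
  classical
  refine ⟨fun ξ hξ => (h 0).1 ξ (mem_iInter.1 hξ 0), ?_, ?_⟩
  · intro β hβ
    have pick : ∀ γ < omega1, ∀ n, ∃ ξ ∈ D n, γ < ξ := fun γ hγ n => (h n).2.1 γ hγ
    choose! g hg₁ hg₂ using pick
    have glt : ∀ γ, γ < omega1 → ∀ n, g γ n < omega1 := fun γ hγ n => (h n).1 _ (hg₁ γ hγ n)
    let next : Ordinal → Ordinal := fun γ => ⨆ n, g γ n
    have hnext_lt : ∀ γ < omega1, next γ < omega1 := fun γ hγ =>
      MOaux.sup_lt_omega1 _ (glt γ hγ)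
    have hnext_gt : ∀ γ < omega1, γ < next γ :=
      fun γ hγ => lt_of_lt_of_le (hg₂ γ hγ 0) (Ordinal.le_iSup _ 0)
    let ξ : ℕ → Ordinal := fun k => next^[k] β
    have hξlt : ∀ k, ξ k < omega1 := by
      intro k
      induction k with
      | zero => exact hβ
      | succ k ih => simpa [ξ, Function.iterate_succ_apply'] using hnext_lt _ ih
    have hξmono : ∀ k, ξ k < ξ (k + 1) := by
      intro k
      simpa [ξ, Function.iterate_succ_apply'] using hnext_gt _ (hξlt k)
    set δ := ⨆ k, ξ k with hδ
    have hδlt : δ < omega1 := MOaux.sup_lt_omega1 _ hξlt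
    have hξleδ : ∀ k, ξ k ≤ δ := Ordinal.le_iSup _
    have hξltδ : ∀ k, ξ k < δ := fun k => lt_of_lt_of_le (hξmono k) (hξleδ (k + 1))
    have hδlim : ∀ n, IsLimitPoint (D n) δ := by
      intro n
      constructor
      · exact lt_of_le_of_lt (zero_le (a := ξ 0)) (hξltδ 0)
      · intro β' hβ'
        obtain ⟨k, hk⟩ := Ordinal.lt_iSup_iff.1 hβ'
        refine ⟨g (ξ k) n, hg₁ _ (hξlt k) n, lt_of_lt_of_le hk (le_of_lt (hg₂ _ (hξlt k) n)), ?_⟩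
        have : g (ξ k) n ≤ ξ (k + 1) := by
          simpa [ξ, Function.iterate_succ_apply'] using Ordinal.le_iSup (g (ξ k)) n
        exact lt_of_le_of_lt this (hξltδ (k + 1))
    have hδmem : δ ∈ ⋂ n, D n := mem_iInter.2 fun n => (h n).2.2 δ hδlt (hδlim n)
    exact ⟨δ, hδmem, show β < δ from lt_of_lt_of_le (hξmono 0) (hξleδ 1)⟩
  · intro δ hδ hlim
    refine mem_iInter.2 fun n => (h n).2.2 δ hδ ⟨hlim.1, fun β hβ => ?_⟩
    obtain ⟨ξ, hξ, h1, h2⟩ := hlim.2 β hβ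
    exact ⟨ξ, mem_iInter.1 hξ n, h1, h2⟩

lemma MOaux.isLimit_of_isLimitPoint {X : Set Ordinal.{u}} {δ : Ordinal.{u}}
    (h : IsLimitPoint X δ) : Order.IsSuccLimit δ := by
  rw [Ordinal.isSuccLimit_iff]
  refine ⟨h.1.ne', Order.isSuccPrelimit_of_succ_lt fun a ha => ?_⟩
  obtain ⟨ξ, _, h1, h2⟩ := h.2 a ha
  exact lt_of_le_of_lt (Order.succ_le_of_lt h1) h2

/-- The single-universe version of the theorem. -/
theorem MOaux.main
    (hM : ∀ c : Ordinal.{u} → Set Ordinal.{u},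
      (∀ α, α < omega1 → Order.IsSuccLimit α → IsClosedCofinalIn (c α) α) →
      ∃ D : Set Ordinal.{u}, IsClubOmega1 D ∧
        ∀ δ, δ < omega1 → IsLimitPoint D δ → Measures (D ∩ Set.Iio δ) (c δ) δ) :
    ∀ 𝒞 : Ordinal.{u} → Set (Set Ordinal.{u}),
      (∀ α, α < omega1 → Order.IsSuccLimit α →
        (𝒞 α).Countable ∧ ∀ c ∈ 𝒞 α, IsClosedCofinalIn c α) →
      ∃ D : Set Ordinal.{u}, IsClubOmega1 D ∧
        ∀ δ, δ < omega1 → IsLimitPoint D δ → ∀ c ∈ 𝒞 δ, Measures (D ∩ Set.Iio δ) c δ := by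
  intro 𝒞 h𝒞
  classical
  set P : Ordinal.{u} → Prop := fun α => α < omega1 ∧ Order.IsSuccLimit α ∧ (𝒞 α).Nonempty with hP
  have e : ∀ α : Ordinal.{u}, ∃ f : ℕ → Set Ordinal.{u}, P α → 𝒞 α = Set.range f := by
    intro α
    by_cases h : P α
    · obtain ⟨f, hf⟩ := (h𝒞 α h.1 h.2.1).1.exists_eq_range h.2.2
      exact ⟨f, fun _ => hf⟩
    · exact ⟨fun _ => Set.Iio α, fun hh => absurd hh h⟩
  choose e he using e
  have hcs : ∀ n : ℕ, ∀ α, α < omega1 → Order.IsSuccLimit α →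
      IsClosedCofinalIn ((fun α => if P α then e α n else Set.Iio α) α) α := by
    intro n α hα hαlim
    by_cases h : P α
    · simp only [if_pos h]
      have : e α n ∈ 𝒞 α := by rw [he α h]; exact Set.mem_range_self n
      exact (h𝒞 α hα hαlim).2 _ this
    · simp only [if_neg h]
      refine ⟨fun ξ hξ => hξ, fun β hβ => ⟨Order.succ β, hαlim.succ_lt hβ, Order.lt_succ β⟩,
        fun γ hγ _ => hγ⟩
  choose Dn hDn using fun n => hM _ (hcs n)
  refine ⟨⋂ n, Dn n, MOaux.isClub_iInter Dn fun n => (hDn n).1, ?_⟩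
  intro δ hδ hlim c hc
  have hPδ : P δ := ⟨hδ, MOaux.isLimit_of_isLimitPoint hlim, ⟨c, hc⟩⟩
  obtain ⟨n, hn⟩ : ∃ n, e δ n = c := by
    rw [he δ hPδ] at hc; obtain ⟨n, hn⟩ := hc; exact ⟨n, hn⟩
  have limn : IsLimitPoint (Dn n) δ := by
    refine ⟨hlim.1, fun β hβ => ?_⟩
    obtain ⟨ξ, hξ, h1, h2⟩ := hlim.2 β hβ
    exact ⟨ξ, Set.mem_iInter.1 hξ n, h1, h2⟩
  obtain ⟨β, hβ, hcase⟩ := (hDn n).2 δ hδ limn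
  rw [if_pos hPδ, hn] at hcase
  refine ⟨β, hβ, ?_⟩
  rcases hcase with h | h
  · left
    intro ξ hξ
    exact h ⟨⟨Set.mem_iInter.1 hξ.1.1 n, hξ.1.2⟩, hξ.2⟩
  · right
    intro ξ hξ hβξ
    exact h ξ ⟨Set.mem_iInter.1 hξ.1 n, hξ.2⟩ hβξ

/-! ### Transfer along `Ordinal.lift` -/

lemma MOaux.lift_omega1 : Ordinal.lift.{u, 0} omega1.{0} = omega1.{u} := by
  rw [omega1, omega1, Cardinal.lift_ord, Cardinal.lift_aleph, Ordinal.lift_one]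

lemma MOaux.lift_lt_omega1 {b : Ordinal.{0}} :
    Ordinal.lift.{u, 0} b < omega1.{u} ↔ b < omega1.{0} := by
  rw [← MOaux.lift_omega1, Ordinal.lift_lt]

lemma MOaux.down_of_lt_omega1 {a : Ordinal.{u}} (h : a < omega1.{u}) :
    ∃ b : Ordinal.{0}, b < omega1.{0} ∧ Ordinal.lift.{u, 0} b = a := by
  rw [← MOaux.lift_omega1] at h
  exact Ordinal.lt_lift_iff.1 h

lemma MOaux.isLimitPoint_lift {X : Set Ordinal.{0}} {d : Ordinal.{0}} :
    IsLimitPoint (Ordinal.lift.{u, 0} '' X) (Ordinal.lift.{u, 0} d) ↔ IsLimitPoint X d := by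
  constructor
  · rintro ⟨h0, h⟩
    refine ⟨?_, fun β hβ => ?_⟩
    · have : Ordinal.lift.{u, 0} 0 < Ordinal.lift.{u, 0} d := by rwa [Ordinal.lift_zero]
      exact Ordinal.lift_lt.1 this
    · obtain ⟨η, ⟨x, hx, rfl⟩, h1, h2⟩ := h _ (Ordinal.lift_lt.2 hβ)
      exact ⟨x, hx, Ordinal.lift_lt.1 h1, Ordinal.lift_lt.1 h2⟩
  · rintro ⟨h0, h⟩
    refine ⟨?_, fun β hβ => ?_⟩
    · have : Ordinal.lift.{u, 0} 0 < Ordinal.lift.{u, 0} d := Ordinal.lift_lt.2 h0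
      rwa [Ordinal.lift_zero] at this
    · obtain ⟨b, hb⟩ := Ordinal.mem_range_lift_of_le (le_of_lt hβ)
      rw [← hb] at hβ
      obtain ⟨x, hx, h1, h2⟩ := h b (Ordinal.lift_lt.1 hβ)
      exact ⟨Ordinal.lift.{u, 0} x, Set.mem_image_of_mem _ hx, hb ▸ Ordinal.lift_lt.2 h1,
        Ordinal.lift_lt.2 h2⟩

lemma MOaux.image_inter_Iio {X : Set Ordinal.{0}} {d : Ordinal.{0}} :
    Ordinal.lift.{u, 0} '' (X ∩ Set.Iio d) =
      (Ordinal.lift.{u, 0} '' X) ∩ Set.Iio (Ordinal.lift.{u, 0} d) := by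
  ext η
  constructor
  · rintro ⟨x, ⟨hx, hxd⟩, rfl⟩
    exact ⟨Set.mem_image_of_mem _ hx, Ordinal.lift_lt.2 hxd⟩
  · rintro ⟨⟨x, hx, rfl⟩, hηd⟩
    exact ⟨x, ⟨hx, Ordinal.lift_lt.1 hηd⟩, rfl⟩

lemma MOaux.measures_lift {X Y : Set Ordinal.{0}} {d : Ordinal.{0}} :
    Measures (Ordinal.lift.{u, 0} '' X) (Ordinal.lift.{u, 0} '' Y) (Ordinal.lift.{u, 0} d) ↔
      Measures X Y d := by
  constructor
  · rintro ⟨β, hβ, hcase⟩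
    obtain ⟨b, hb⟩ := Ordinal.mem_range_lift_of_le (le_of_lt hβ)
    rw [← hb] at hβ hcase
    refine ⟨b, Ordinal.lift_lt.1 hβ, ?_⟩
    rcases hcase with h | h
    · left
      rintro ξ ⟨hξX, hξb⟩
      have : Ordinal.lift.{u, 0} ξ ∈ Ordinal.lift.{u, 0} '' Y :=
        h ⟨Set.mem_image_of_mem _ hξX, Ordinal.lift_le.2 hξb⟩
      obtain ⟨y, hy, hyy⟩ := this
      rwa [← Ordinal.lift_inj.1 hyy]
    · right
      intro ξ hξX hbξ hξY
      exact h _ (Set.mem_image_of_mem _ hξX) (Ordinal.lift_le.2 hbξ)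
        (Set.mem_image_of_mem _ hξY)
  · rintro ⟨b, hb, hcase⟩
    refine ⟨Ordinal.lift.{u, 0} b, Ordinal.lift_lt.2 hb, ?_⟩
    rcases hcase with h | h
    · left
      rintro η ⟨⟨x, hx, rfl⟩, hbη⟩
      exact Set.mem_image_of_mem _ (h ⟨hx, Ordinal.lift_le.1 hbη⟩)
    · right
      rintro η ⟨x, hx, rfl⟩ hbη ⟨y, hy, hyy⟩
      exact h x hx (Ordinal.lift_le.1 hbη) (Ordinal.lift_inj.1 hyy ▸ hy)

lemma MOaux.isClosedCofinalIn_lift {c : Set Ordinal.{0}} {a : Ordinal.{0}} :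
    IsClosedCofinalIn (Ordinal.lift.{u, 0} '' c) (Ordinal.lift.{u, 0} a) ↔
      IsClosedCofinalIn c a := by
  constructor
  · rintro ⟨h1, h2, h3⟩
    refine ⟨fun ξ hξ => ?_, fun β hβ => ?_, fun γ hγ hlp => ?_⟩
    · exact Ordinal.lift_lt.1 (h1 _ (Set.mem_image_of_mem _ hξ))
    · obtain ⟨η, ⟨x, hx, rfl⟩, hη⟩ := h2 _ (Ordinal.lift_lt.2 hβ)
      exact ⟨x, hx, Ordinal.lift_lt.1 hη⟩
    · have := h3 _ (Ordinal.lift_lt.2 hγ) (MOaux.isLimitPoint_lift.2 hlp)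
      obtain ⟨x, hx, hxx⟩ := this
      rwa [← Ordinal.lift_inj.1 hxx]
  · rintro ⟨h1, h2, h3⟩
    refine ⟨?_, fun β hβ => ?_, fun γ hγ hlp => ?_⟩
    · rintro η ⟨x, hx, rfl⟩
      exact Ordinal.lift_lt.2 (h1 x hx)
    · obtain ⟨b, hb⟩ := Ordinal.mem_range_lift_of_le (le_of_lt hβ)
      rw [← hb] at hβ ⊢
      obtain ⟨x, hx, hxb⟩ := h2 b (Ordinal.lift_lt.1 hβ)
      exact ⟨Ordinal.lift.{u, 0} x, Set.mem_image_of_mem _ hx, Ordinal.lift_lt.2 hxb⟩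
    · obtain ⟨g, hg⟩ := Ordinal.mem_range_lift_of_le (le_of_lt hγ)
      rw [← hg] at hγ hlp ⊢
      exact Set.mem_image_of_mem _
        (h3 g (Ordinal.lift_lt.1 hγ) (MOaux.isLimitPoint_lift.1 hlp))

lemma MOaux.isClub_lift {D : Set Ordinal.{0}} :
    IsClubOmega1 (Ordinal.lift.{u, 0} '' D) ↔ IsClubOmega1 D := by
  constructor
  · rintro ⟨h1, h2, h3⟩
    refine ⟨fun ξ hξ => ?_, fun β hβ => ?_, fun δ hδ hlp => ?_⟩
    · exact MOaux.lift_lt_omega1.1 (h1 _ (Set.mem_image_of_mem _ hξ))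
    · obtain ⟨η, ⟨x, hx, rfl⟩, hη⟩ := h2 _ (MOaux.lift_lt_omega1.2 hβ)
      exact ⟨x, hx, Ordinal.lift_lt.1 hη⟩
    · have := h3 _ (MOaux.lift_lt_omega1.2 hδ) (MOaux.isLimitPoint_lift.2 hlp)
      obtain ⟨x, hx, hxx⟩ := this
      rwa [← Ordinal.lift_inj.1 hxx]
  · rintro ⟨h1, h2, h3⟩
    refine ⟨?_, fun β hβ => ?_, fun δ hδ hlp => ?_⟩
    · rintro η ⟨x, hx, rfl⟩
      exact MOaux.lift_lt_omega1.2 (h1 x hx)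
    · obtain ⟨b, hbω, hb⟩ := MOaux.down_of_lt_omega1 hβ
      obtain ⟨x, hx, hxb⟩ := h2 b hbω
      exact ⟨Ordinal.lift.{u, 0} x, Set.mem_image_of_mem _ hx, hb ▸ Ordinal.lift_lt.2 hxb⟩
    · obtain ⟨d, hdω, hd⟩ := MOaux.down_of_lt_omega1 hδ
      rw [← hd] at hlp ⊢
      exact Set.mem_image_of_mem _ (h3 d hdω (MOaux.isLimitPoint_lift.1 hlp))

lemma MOaux.image_preimage {S : Set Ordinal.{u}} (h : ∀ ξ ∈ S, ξ < omega1.{u}) :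
    Ordinal.lift.{u, 0} '' (Ordinal.lift.{u, 0} ⁻¹' S) = S := by
  apply Set.image_preimage_eq_of_subset
  intro ξ hξ
  obtain ⟨b, _, hb⟩ := MOaux.down_of_lt_omega1 (h ξ hξ)
  exact ⟨b, hb⟩

theorem MOaux.final
    (hM : ∀ c : Ordinal.{v} → Set Ordinal.{v},
      (∀ α, α < omega1 → Order.IsSuccLimit α → IsClosedCofinalIn (c α) α) →
      ∃ D : Set Ordinal, IsClubOmega1 D ∧
        ∀ δ, δ < omega1 → IsLimitPoint D δ → Measures (D ∩ Set.Iio δ) (c δ) δ) :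
    ∀ 𝒞 : Ordinal.{u} → Set (Set Ordinal.{u}),
      (∀ α, α < omega1 → Order.IsSuccLimit α →
        (𝒞 α).Countable ∧ ∀ c ∈ 𝒞 α, IsClosedCofinalIn c α) →
      ∃ D : Set Ordinal.{u}, IsClubOmega1 D ∧
        ∀ δ, δ < omega1 → IsLimitPoint D δ → ∀ c ∈ 𝒞 δ, Measures (D ∩ Set.Iio δ) c δ := by
  classical
  -- Step 1: transfer `hM` down to universe 0.
  have hM0 : ∀ c : Ordinal.{0} → Set Ordinal.{0},
      (∀ α, α < omega1 → Order.IsSuccLimit α → IsClosedCofinalIn (c α) α) →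
      ∃ D : Set Ordinal.{0}, IsClubOmega1 D ∧
        ∀ δ, δ < omega1 → IsLimitPoint D δ → Measures (D ∩ Set.Iio δ) (c δ) δ := by
    intro c₀ hc₀
    set inv : Ordinal → Ordinal.{0} := fun α =>
      if h : ∃ b : Ordinal.{0}, Ordinal.lift.{v, 0} b = α then h.choose else 0 with hinvdef
    have hinv : ∀ b : Ordinal.{0}, inv (Ordinal.lift.{v, 0} b) = b := by
      intro b
      have h : ∃ b' : Ordinal.{0}, Ordinal.lift.{v, 0} b' = Ordinal.lift.{v, 0} b := ⟨b, rfl⟩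
      simp only [hinvdef, dif_pos h]
      exact Ordinal.lift_inj.1 h.choose_spec
    set cv : Ordinal → Set Ordinal := fun α => Ordinal.lift.{v, 0} '' c₀ (inv α) with hcvdef
    have hcv : ∀ α, α < omega1 → Order.IsSuccLimit α → IsClosedCofinalIn (cv α) α := by
      intro α hα hαl
      obtain ⟨a, ha, rfl⟩ := MOaux.down_of_lt_omega1 hα
      have : cv (Ordinal.lift.{v, 0} a) = Ordinal.lift.{v, 0} '' c₀ a := by rw [hcvdef]; simp only [hinv]
      rw [this]
      exact MOaux.isClosedCofinalIn_lift.2 (hc₀ a ha (Ordinal.isSuccLimit_lift.1 hαl))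
    obtain ⟨Dv, hDv, hmeas⟩ := hM cv hcv
    have hDveq : Ordinal.lift.{v, 0} '' (Ordinal.lift.{v, 0} ⁻¹' Dv) = Dv := MOaux.image_preimage hDv.1
    refine ⟨Ordinal.lift.{v, 0} ⁻¹' Dv, MOaux.isClub_lift.1 (by rwa [hDveq]), ?_⟩
    intro d hd hlp
    have h1 : IsLimitPoint Dv (Ordinal.lift.{v, 0} d) := by
      rw [← hDveq]; exact MOaux.isLimitPoint_lift.2 hlp
    have h2 := hmeas (Ordinal.lift.{v, 0} d) (MOaux.lift_lt_omega1.2 hd) h1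
    rw [← hDveq, ← MOaux.image_inter_Iio] at h2
    have hc : cv (Ordinal.lift.{v, 0} d) = Ordinal.lift.{v, 0} '' c₀ d := by
      rw [hcvdef]; simp only [hinv]
    rw [hc] at h2
    exact MOaux.measures_lift.1 h2
  -- Step 2: the single-universe theorem at universe 0.
  have key := MOaux.main hM0
  -- Step 3: transfer the conclusion up.
  intro 𝒞 h𝒞
  set 𝒞₀ : Ordinal.{0} → Set (Set Ordinal.{0}) := fun a =>
    (fun s => Ordinal.lift.{u, 0} ⁻¹' s) '' 𝒞 (Ordinal.lift.{u, 0} a) with h𝒞₀def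
  have h𝒞₀ : ∀ a, a < omega1 → Order.IsSuccLimit a →
      (𝒞₀ a).Countable ∧ ∀ c ∈ 𝒞₀ a, IsClosedCofinalIn c a := by
    intro a ha hal
    have hLa : Ordinal.lift.{u, 0} a < omega1 := MOaux.lift_lt_omega1.2 ha
    obtain ⟨hcnt, hcc⟩ := h𝒞 (Ordinal.lift.{u, 0} a) hLa (Ordinal.isSuccLimit_lift.2 hal)
    refine ⟨hcnt.image _, ?_⟩
    rintro c ⟨s, hs, rfl⟩
    have hscc := hcc s hs
    have hseq : Ordinal.lift.{u, 0} '' (Ordinal.lift.{u, 0} ⁻¹' s) = s :=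
      MOaux.image_preimage fun ξ hξ => lt_trans (hscc.1 ξ hξ) hLa
    rw [← hseq] at hscc
    exact MOaux.isClosedCofinalIn_lift.1 hscc
  obtain ⟨D₀, hD₀, hmeas₀⟩ := key 𝒞₀ h𝒞₀
  refine ⟨Ordinal.lift.{u, 0} '' D₀, MOaux.isClub_lift.2 hD₀, ?_⟩
  intro δ hδ hlp c hc
  obtain ⟨d, hd, rfl⟩ := MOaux.down_of_lt_omega1 hδ
  have hlp₀ : IsLimitPoint D₀ d := MOaux.isLimitPoint_lift.1 hlp
  have hc₀mem : Ordinal.lift.{u, 0} ⁻¹' c ∈ 𝒞₀ d := ⟨c, hc, rfl⟩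
  have hm := hmeas₀ d hd hlp₀ _ hc₀mem
  have hδlim : Order.IsSuccLimit (Ordinal.lift.{u, 0} d) := MOaux.isLimit_of_isLimitPoint hlp
  have hceq : Ordinal.lift.{u, 0} '' (Ordinal.lift.{u, 0} ⁻¹' c) = c := by
    apply MOaux.image_preimage
    intro ξ hξ
    exact lt_trans (((h𝒞 _ hδ hδlim).2 c hc).1 ξ hξ) hδ
  have := MOaux.measures_lift.2 hm
  rw [MOaux.image_inter_Iio, hceq] at this
  exact this


/-- Measuring implies Measuring_ω. -/
theorem measuring_omega_of_measuring
    (hM : ∀ c : Ordinal → Set Ordinal,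
      (∀ α, α < omega1 → Order.IsSuccLimit α → IsClosedCofinalIn (c α) α) →
      ∃ D : Set Ordinal, IsClubOmega1 D ∧
        ∀ δ, δ < omega1 → IsLimitPoint D δ → Measures (D ∩ Set.Iio δ) (c δ) δ) :
    ∀ 𝒞 : Ordinal → Set (Set Ordinal),
      (∀ α, α < omega1 → Order.IsSuccLimit α →
        (𝒞 α).Countable ∧ ∀ c ∈ 𝒞 α, IsClosedCofinalIn c α) →
      ∃ D : Set Ordinal, IsClubOmega1 D ∧
        ∀ δ, δ < omega1 → IsLimitPoint D δ → ∀ c ∈ 𝒞 δ, Measures (D ∩ Set.Iio δ) c δ :=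
  MOaux.final hM
end
end

section
/- In the poset ℙ of Proposition 3.1 (conditions (x,a) with x ∈ M open bounded in δ, a ∈ [𝒴]^{<ω}, ordered by end-extension with y \ x ⊆ ⋂a), for every club C ⊆ ω₁ with C ∈ M, the set E_C = {(x,a) ∈ ℙ : x ∩ C ≠ ∅} is dense in ℙ. -/
noncomputable section
open Set

/-- z is M-stationary: it meets every club of ω₁ belonging to M
(here MSets is the collection of subsets of ω₁ that belong to M). -/
def MStat (MSets : Set (Set Ordinal)) (z : Set Ordinal) : Prop :=
  ∀ C ∈ MSets, IsClubω₁ C → (z ∩ C).Nonempty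

/-- A set of ordinals is open in the order topology. -/
def IsOpenSub (x : Set Ordinal) : Prop :=
  ∀ ξ ∈ x, ξ = 0 ∨ ∃ β < ξ, Set.Ioc β ξ ⊆ x

/-- A condition of the poset ℙ of Proposition 3.1: a pair (x, a) where x ∈ M is
an open bounded subset of δ = M ∩ ω₁ and a is a finite subset of 𝒴. -/
structure Cond (MSets 𝒴 : Set (Set Ordinal)) (δ : Ordinal) where
  x : Set Ordinal
  a : Set (Set Ordinal)
  x_mem : x ∈ MSets
  x_open : IsOpenSub x
  x_sub : ∀ ξ ∈ x, ξ < δ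
  x_bdd : ∃ β < δ, ∀ ξ ∈ x, ξ < β
  a_fin : a.Finite
  a_sub : a ⊆ 𝒴

/-- The order on ℙ: (y, b) ≤ (x, a) iff y end-extends x, a ⊆ b, and y \ x ⊆ ⋂ a. -/
def Cond.le {MSets 𝒴 : Set (Set Ordinal)} {δ : Ordinal}
    (q p : Cond MSets 𝒴 δ) : Prop :=
  p.x ⊆ q.x ∧ (∀ ξ ∈ q.x, ξ ∉ p.x → ∀ η ∈ p.x, η < ξ) ∧
    p.a ⊆ q.a ∧ (q.x \ p.x ⊆ ⋂₀ p.a)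

lemma exists_beta_aux {α β₀ : Ordinal} (hβ₀ : β₀ < α) {a : Set (Set Ordinal)} (ha : a.Finite) :
    (∀ X ∈ a, ∃ β < α, Set.Ioc β α ⊆ X) →
    ∃ β, β₀ ≤ β ∧ β < α ∧ Set.Ioc β α ⊆ ⋂₀ a := by
  refine Set.Finite.induction_on
    (motive := fun s _ => (∀ X ∈ s, ∃ β < α, Set.Ioc β α ⊆ X) →
      ∃ β, β₀ ≤ β ∧ β < α ∧ Set.Ioc β α ⊆ ⋂₀ s) a ha
    (fun _ => ⟨β₀, le_rfl, hβ₀, by simp⟩) ?_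
  intro X s _ _ ih h
  obtain ⟨βX, hβX, hIocX⟩ := h X (mem_insert _ _)
  obtain ⟨β, hβ₀β, hβα, hsub⟩ := ih fun Y hY => h Y (mem_insert_of_mem _ hY)
  refine ⟨max β βX, le_trans hβ₀β (le_max_left _ _), max_lt hβα hβX, ?_⟩
  rw [sInter_insert]
  intro ξ hξ
  exact ⟨hIocX ⟨lt_of_le_of_lt (le_max_right _ _) hξ.1, hξ.2⟩,
    hsub ⟨lt_of_le_of_lt (le_max_left _ _) hξ.1, hξ.2⟩⟩

lemma limitPoints_club {C : Set Ordinal} (hC : IsClubω₁ C) {β₀ : Ordinal} (hβ₀ : β₀ < omega1) :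
    IsClubω₁ {γ | γ < omega1 ∧ β₀ < γ ∧ IsLimitPoint C γ} := by
  refine ⟨fun ξ hξ => hξ.1, ?_, ?_⟩
  · -- unbounded
    intro β hβ
    set b := max β β₀ with hb
    have hbω : b < omega1 := max_lt hβ hβ₀
    set g : Ordinal → Ordinal := fun ξ => if h : ξ < omega1 then (hC.2.1 ξ h).choose else 0
      with hgdef
    have hg : ∀ ξ, ξ < omega1 → g ξ ∈ C ∧ ξ < g ξ := by
      intro ξ h
      simp only [hgdef, dif_pos h]
      obtain ⟨h1, h2⟩ := (hC.2.1 ξ h).choose_spec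
      exact ⟨h1, h2⟩
    set f : ℕ → Ordinal := fun n => g^[n] (g b) with hfdef
    have inv : ∀ n, f n ∈ C ∧ b < f n ∧ f n < omega1 := by
      intro n
      induction n with
      | zero =>
        obtain ⟨h1, h2⟩ := hg b hbω
        exact ⟨h1, h2, hC.1 _ h1⟩
      | succ n ih =>
        have hstep : f (n+1) = g (f n) := Function.iterate_succ_apply' _ _ _
        obtain ⟨h1, h2⟩ := hg (f n) ih.2.2
        rw [hstep]
        exact ⟨h1, lt_trans ih.2.1 h2, hC.1 _ h1⟩
    have hmono : ∀ n, f n < f (n+1) := by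
      intro n
      have hstep : f (n+1) = g (f n) := Function.iterate_succ_apply' _ _ _
      rw [hstep]
      exact (hg (f n) (inv n).2.2).2
    set γ := ⨆ n, f n with hγ
    have hγω : γ < omega1 := by
      rw [hγ, omega1]
      apply Cardinal.iSup_lt_ord_lift_of_isRegular Cardinal.isRegular_aleph_one
      · rw [Cardinal.mk_nat, Cardinal.lift_aleph0]; exact Cardinal.aleph0_lt_aleph_one
      · exact fun n => (inv n).2.2
    have hbγ : b < γ := lt_of_lt_of_le (inv 0).2.1 (Ordinal.le_iSup f 0)
    refine ⟨γ, ⟨hγω, lt_of_le_of_lt (le_max_right _ _) hbγ, ?_, ?_⟩,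
      lt_of_le_of_lt (le_max_left _ _) hbγ⟩
    · exact lt_of_le_of_lt (zero_le (a := b)) hbγ
    · intro x hx
      obtain ⟨n, hn⟩ := Ordinal.lt_iSup_iff.mp hx
      exact ⟨f n, (inv n).1, hn, lt_of_lt_of_le (hmono n) (Ordinal.le_iSup f (n+1))⟩
  · -- closed
    intro γ hγ hlim
    obtain ⟨ξ, hξD, _, hξγ⟩ := hlim.2 0 hlim.1
    refine ⟨hγ, lt_trans hξD.2.1 hξγ, hlim.1, ?_⟩
    intro β hβ
    obtain ⟨ξ, hξD, hβξ, hξγ⟩ := hlim.2 β hβ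
    obtain ⟨η, hηC, hβη, hηξ⟩ := hξD.2.2.2 β hβξ
    exact ⟨η, hηC, hβη, lt_trans hηξ hξγ⟩

/-- Density of E_C = {(x,a) : x ∩ C ≠ ∅} for every club C ∈ M. -/
theorem E_C_dense (MSets 𝒴 : Set (Set Ordinal)) (δ : Ordinal)
    (hδ : Order.IsSuccLimit δ) (hδω1 : δ < omega1)
    (h𝒴 : ∀ X ∈ 𝒴, IsOpenSub X ∧ X ⊆ Set.Iio δ)
    (hFIP : ∀ a ⊆ 𝒴, a.Finite → MStat MSets (Set.Iio δ ∩ ⋂₀ a))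
    -- elementarity-type closure properties of M:
    (hInt : ∀ β γ : Ordinal, β < δ → γ < δ → Set.Ioo β γ ∈ MSets)
    (hUnion : ∀ x ∈ MSets, ∀ y ∈ MSets, x ∪ y ∈ MSets)
    (hLimC : ∀ C ∈ MSets, IsClubω₁ C → ∀ β < δ,
      {γ | γ < omega1 ∧ β < γ ∧ IsLimitPoint C γ} ∈ MSets) :
    ∀ C ∈ MSets, IsClubω₁ C → ∀ p : Cond MSets 𝒴 δ,
      ∃ q : Cond MSets 𝒴 δ, Cond.le q p ∧ (q.x ∩ C).Nonempty := by
  intro C hCM hC p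
  obtain ⟨β₀, hβ₀δ, hβ₀bd⟩ := p.x_bdd
  -- the set of limit points of C above β₀ is a club in M
  set D := {γ | γ < omega1 ∧ β₀ < γ ∧ IsLimitPoint C γ} with hD
  have hDM : D ∈ MSets := hLimC C hCM hC β₀ hβ₀δ
  have hDclub : IsClubω₁ D := limitPoints_club hC (lt_trans hβ₀δ hδω1)
  -- pick α in (Iio δ ∩ ⋂₀ p.a) ∩ D
  obtain ⟨α, ⟨hαδ, hαa⟩, hαD⟩ := hFIP p.a p.a_sub p.a_fin D hDM hDclub
  have hαδ' : α < δ := hαδ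
  have hβ₀α : β₀ < α := hαD.2.1
  have hα0 : 0 < α := hαD.2.2.1
  have hαω1 : α < omega1 := hαD.1
  have hαC : α ∈ C := hC.2.2 α hαω1 hαD.2.2
  -- find β* with β₀ ≤ β* < α and Ioc β* α ⊆ ⋂₀ p.a
  have hopen : ∀ X ∈ p.a, ∃ β < α, Set.Ioc β α ⊆ X := by
    intro X hX
    have hXα : α ∈ X := hαa X hX
    rcases (h𝒴 X (p.a_sub hX)).1 α hXα with h0 | h
    · exact absurd h0.symm (ne_of_lt hα0)
    · exact h
  obtain ⟨β', hβ₀β', hβ'α, hβ'sub⟩ := exists_beta_aux hβ₀α p.a_fin hopen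
  have hsucc : α + 1 < δ := by rw [Ordinal.add_one_eq_succ]; exact hδ.succ_lt hαδ'
  have hIoo : Set.Ioo β' (α + 1) ⊆ Set.Ioc β' α := by
    intro ξ hξ
    exact ⟨hξ.1, Order.lt_succ_iff.mp (by rw [← Ordinal.add_one_eq_succ]; exact hξ.2)⟩
  have hαmem : α ∈ Set.Ioo β' (α + 1) := ⟨hβ'α, by
    rw [Ordinal.add_one_eq_succ]; exact Order.lt_succ α⟩
  refine ⟨⟨p.x ∪ Set.Ioo β' (α + 1), p.a,
    hUnion p.x p.x_mem _ (hInt β' (α + 1) (lt_trans hβ'α hαδ') hsucc), ?_, ?_, ?_,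
    p.a_fin, p.a_sub⟩, ⟨?_, ?_, subset_rfl, ?_⟩, α, Or.inr hαmem, hαC⟩
  · -- open
    intro ξ hξ
    rcases hξ with hξ | hξ
    · rcases p.x_open ξ hξ with h0 | ⟨β, hβ, hsub⟩
      · exact Or.inl h0
      · exact Or.inr ⟨β, hβ, fun η hη => Or.inl (hsub hη)⟩
    · exact Or.inr ⟨β', hξ.1, fun η hη => Or.inr ⟨hη.1, lt_of_le_of_lt hη.2 hξ.2⟩⟩
  · -- bounded by δ
    intro ξ hξ
    rcases hξ with hξ | hξ
    · exact p.x_sub ξ hξ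
    · exact lt_of_lt_of_le hξ.2 (by
        rw [Ordinal.add_one_eq_succ, Order.succ_le_iff]; exact hαδ')
  · -- bounded below δ
    exact ⟨α + 1, hsucc, fun ξ hξ => by
      rcases hξ with hξ | hξ
      · exact lt_trans (hβ₀bd ξ hξ) (lt_of_le_of_lt hβ₀β' (lt_trans hβ'α
          (by rw [Ordinal.add_one_eq_succ]; exact Order.lt_succ α)))
      · exact hξ.2⟩
  · exact subset_union_left
  · -- end-extension
    intro ξ hξ hξp η hη
    rcases hξ with hξ | hξ
    · exact absurd hξ hξp
    · exact lt_of_lt_of_le (hβ₀bd η hη) (le_trans hβ₀β' (le_of_lt hξ.1))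
  · -- new part in ⋂₀ p.a
    intro ξ hξ
    rcases hξ.1 with h | h
    · exact absurd h hξ.2
    · exact hβ'sub (hIoo h)
end
end
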